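/- arXiv:2009.04259 — 12 statements merged into one kernel-verified Lean document; each statement's English description precedes it below -/
import Mathlib

section
/- For all natural numbers k, n, m with ⌈log n⌉^(k+1) ≤ n and m < ⌈log n⌉^(k+1), there is no m-local function f : (Fin n → Bool) → Bool such that for every binary string w of length n, f(w) = true if and only if w ∈ INIT_{k+1}. (Combinatorial core of the lower bound in Theorem 1: INIT_{k+1} is not decidable by a deterministic random-access machine reading at most m input bits.) -/
/-- `w ∈ INIT_k`: `⌈log n⌉^k ≤ n` and the first `⌈log n⌉^k` bits of `w` are `0`. -/
def InitMem (k n : ℕ) (w : Fin n → Bool) : Prop :=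
  (Nat.clog 2 n) ^ k ≤ n ∧ ∀ i : Fin n, (i : ℕ) < (Nat.clog 2 n) ^ k → w i = false

/-- `f` is `m`-local: its value on any input is determined by at most `m` bits. -/
def IsLocal (n m : ℕ) (f : (Fin n → Bool) → Bool) : Prop :=
  ∀ w : Fin n → Bool, ∃ S : Finset (Fin n), S.card ≤ m ∧
    ∀ v : Fin n → Bool, (∀ i ∈ S, v i = w i) → f v = f w

theorem init_lower_bound (k n m : ℕ)
    (hkn : (Nat.clog 2 n) ^ (k + 1) ≤ n)
    (hm : m < (Nat.clog 2 n) ^ (k + 1)) :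
    ¬ ∃ f : (Fin n → Bool) → Bool, IsLocal n m f ∧
        ∀ w : Fin n → Bool, (f w = true ↔ InitMem (k + 1) n w) := by
  rintro ⟨f, hloc, hspec⟩
  set c := (Nat.clog 2 n) ^ (k + 1) with hc
  have hw : f (fun _ => false) = true :=
    (hspec _).2 ⟨hkn, fun i _ => rfl⟩
  obtain ⟨S, hScard, hSf⟩ := hloc (fun _ => false)
  -- find an index j with (j : ℕ) < c and j ∉ S
  have hj : ∃ j : Fin n, (j : ℕ) < c ∧ j ∉ S := by
    by_contra h
    push_neg at h
    have hsub : (Finset.univ.filter (fun i : Fin n => (i : ℕ) < c)) ⊆ S :=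
      fun i hi => h i (Finset.mem_filter.mp hi).2
    have himg : (Finset.univ.image (fun i : Fin c => Fin.castLE hkn i)) ⊆
        (Finset.univ.filter (fun i : Fin n => (i : ℕ) < c)) := by
      intro i hi
      simp only [Finset.mem_image] at hi
      obtain ⟨a, -, rfl⟩ := hi
      simp [Fin.castLE, a.isLt]
    have hcardimg : (Finset.univ.image (fun i : Fin c => Fin.castLE hkn i)).card = c := by
      rw [Finset.card_image_of_injective _ (Fin.castLE_injective hkn)]
      simp
    have : c ≤ m := by
      calc c = _ := hcardimg.symm
        _ ≤ (Finset.univ.filter (fun i : Fin n => (i : ℕ) < c)).card :=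
            Finset.card_le_card himg
        _ ≤ S.card := Finset.card_le_card hsub
        _ ≤ m := hScard
    omega
  obtain ⟨j, hjc, hjS⟩ := hj
  set v : Fin n → Bool := Function.update (fun _ => false) j true with hv
  have hfv : f v = true := by
    rw [hSf v (by
      intro i hi
      apply Function.update_of_ne
      rintro rfl
      exact hjS hi)]
    exact hw
  have := ((hspec v).1 hfv).2 j hjc
  simp [hv, Function.update_self] at this
end

section
/- For all natural numbers k, n, m with ⌈log n⌉^(k+1) ≤ n and m < ⌈log n⌉^(k+1), there is no predicate A : (Fin n → Bool) → Prop having acceptance certificates of size m such that for every binary string w of length n, A(w) holds if and only if w ∈ CONSEQ_{k+1}. (Combinatorial core of the lower bound in Theorem 2: CONSEQ_{k+1} is not decidable by a nondeterministic random-access machine whose accepting computations read at most m input bits.) -/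
/-- `w` has a run of zeros of length `L` at position `i`. -/
def hasRunAt (n : ℕ) (w : Fin n → Bool) (i L : ℕ) : Prop :=
  i + L ≤ n ∧ ∀ j : Fin n, i ≤ (j : ℕ) → (j : ℕ) < i + L → w j = false

/-- `w` has a run of zeros of length `L` (at some position). -/
def hasRun (n : ℕ) (w : Fin n → Bool) (L : ℕ) : Prop :=
  ∃ i : ℕ, hasRunAt n w i L

/-- `w ∈ CONSEQ_k`: `w` has a run of zeros of length `⌈log n⌉^k`. -/
def ConseqMem (k n : ℕ) (w : Fin n → Bool) : Prop :=
  hasRun n w ((Nat.clog 2 n) ^ k)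

/-- `A` has acceptance certificates of size `m`. -/
def HasAccCert (n m : ℕ) (A : (Fin n → Bool) → Prop) : Prop :=
  ∀ w : Fin n → Bool, A w → ∃ S : Finset (Fin n), S.card ≤ m ∧
    ∀ v : Fin n → Bool, (∀ i ∈ S, v i = w i) → A v

theorem conseq_lower_bound (k n m : ℕ)
    (hkn : (Nat.clog 2 n) ^ (k + 1) ≤ n)
    (hm : m < (Nat.clog 2 n) ^ (k + 1)) :
    ¬ ∃ A : (Fin n → Bool) → Prop, HasAccCert n m A ∧
        ∀ w : Fin n → Bool, (A w ↔ ConseqMem (k + 1) n w) := by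

  rintro ⟨A, hcert, hA⟩
  set L := (Nat.clog 2 n) ^ (k + 1) with hL
  have hw : A (fun _ => false) := by
    rw [hA]
    exact ⟨0, by simpa using hkn, fun j _ _ => rfl⟩
  obtain ⟨S, hS, hSv⟩ := hcert _ hw
  set v : Fin n → Bool := fun i => if i ∈ S then false else true with hv
  have hAv : A v := hSv v (fun i hi => by simp [hv, hi])
  rw [hA] at hAv
  obtain ⟨i, hin, hrun⟩ := hAv
  set f : Fin L → Fin n := fun j => ⟨i + j, lt_of_lt_of_le (Nat.add_lt_add_left j.isLt i) hin⟩ with hf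
  have hsub : ∀ j : Fin L, f j ∈ S := by
    intro j
    have := hrun (f j) (by simp [hf]) (by simp [hf]; exact j.isLt)
    by_contra hns
    simp [hv, hns] at this
  have hcard : L ≤ S.card := by
    have h1 : Finset.card (Finset.image f Finset.univ) ≤ S.card := by
      apply Finset.card_le_card
      intro x hx
      simp only [Finset.mem_image, Finset.mem_univ, true_and] at hx
      obtain ⟨j, rfl⟩ := hx
      exact hsub j
    have hinj : Function.Injective f := by
      intro a b h
      have : i + (a:ℕ) = i + (b:ℕ) := congrArg Fin.val h
      exact Fin.ext (by omega)
    calc L = Finset.card (Finset.univ : Finset (Fin L)) := by simp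
      _ = _ := (Finset.card_image_of_injective _ hinj).symm
      _ ≤ S.card := h1
  omega
end

section
/- For all natural numbers k, n, m with ⌈log n⌉^(k+1) ≤ n and m < ⌈log n⌉^(k+1), there is no predicate A : (Fin n → Bool) → Prop having rejection certificates of size m such that for every binary string w of length n, A(w) holds if and only if w ∈ NOCONSEQ_{k+1}. (Combinatorial core of the lower bound in Theorem 3: NOCONSEQ_{k+1} is not decidable by a co-nondeterministic random-access machine whose rejecting computations read at most m input bits.) -/
/-- `w ∈ NOCONSEQ_k`: `w` has no run of zeros of length `⌈log n⌉^k`. -/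
def NoConseqMem (k n : ℕ) (w : Fin n → Bool) : Prop :=
  ¬ hasRun n w ((Nat.clog 2 n) ^ k)

/-- `A` has rejection certificates of size `m`. -/
def HasRejCert (n m : ℕ) (A : (Fin n → Bool) → Prop) : Prop :=
  ∀ w : Fin n → Bool, ¬ A w → ∃ S : Finset (Fin n), S.card ≤ m ∧
    ∀ v : Fin n → Bool, (∀ i ∈ S, v i = w i) → ¬ A v

theorem noconseq_lower_bound (k n m : ℕ)
    (hkn : (Nat.clog 2 n) ^ (k + 1) ≤ n)
    (hm : m < (Nat.clog 2 n) ^ (k + 1)) :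
    ¬ ∃ A : (Fin n → Bool) → Prop, HasRejCert n m A ∧
        ∀ w : Fin n → Bool, (A w ↔ NoConseqMem (k + 1) n w) := by
  rintro ⟨A, hcert, hspec⟩
  set L := (Nat.clog 2 n) ^ (k + 1) with hL
  -- all-zero string is rejected
  have hzero : ¬ A (fun _ => false) := by
    rw [hspec]
    intro h
    exact h ⟨0, by simpa using hkn, fun j _ _ => rfl⟩
  obtain ⟨S, hScard, hSrej⟩ := hcert _ hzero
  -- v : false exactly on S
  set v : Fin n → Bool := fun i => decide (i ∉ S) with hv
  have hvrej : ¬ A v := hSrej v (by intro i hi; simp [hv, hi])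
  have hvrun : hasRun n v L := by
    by_contra h
    exact hvrej ((hspec v).mpr h)
  obtain ⟨i, hiL, hrun⟩ := hvrun
  -- map Fin L into S injectively
  have hinj : ∀ j : ℕ, j < L → ∃ hj : i + j < n, (⟨i + j, hj⟩ : Fin n) ∈ S := by
    intro j hj
    have hlt : i + j < n := lt_of_lt_of_le (by omega) hiL
    refine ⟨hlt, ?_⟩
    have := hrun ⟨i + j, hlt⟩ (by simp) (by simp; omega)
    by_contra hmem
    simp [hv, hmem] at this
  have hle : L ≤ S.card := by
    classical
    have : ∀ j : Fin L, (⟨i + (j : ℕ), (hinj j j.2).1⟩ : Fin n) ∈ S :=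
      fun j => (hinj j j.2).2
    have hcardle := Finset.card_le_card_of_injOn
      (s := Finset.univ)
      (fun j : Fin L => (⟨i + (j : ℕ), (hinj j j.2).1⟩ : Fin n))
      (fun j _ => this j)
      (fun a _ b _ hab => by simpa [Fin.ext_iff] using hab)
    simpa using hcardle
  omega
end

section
/- For all natural numbers k, n, m with 2·⌈log n⌉^(k+1) + 1 ≤ n and m < ⌈log n⌉^(k+1), there is no predicate A : (Fin n → Bool) → Prop having rejection certificates of size m such that for every binary string w of length n, A(w) holds if and only if w ∈ EXACTLYONCE_{k+1}. (Combinatorial core of the lower bound in Theorem 4: EXACTLYONCE_{k+1} is not decidable by an alternating random-access machine whose rejecting computations read at most m input bits.) -/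
/-- `w ∈ EXACTLYONCE_k`: exactly one position carries a run of zeros of length `⌈log n⌉^k`. -/
def ExactlyOnceMem (k n : ℕ) (w : Fin n → Bool) : Prop :=
  ∃! i : ℕ, hasRunAt n w i ((Nat.clog 2 n) ^ k)

theorem exactlyonce_lower_bound (k n m : ℕ)
    (hkn : 2 * (Nat.clog 2 n) ^ (k + 1) + 1 ≤ n)
    (hm : m < (Nat.clog 2 n) ^ (k + 1)) :
    ¬ ∃ A : (Fin n → Bool) → Prop, HasRejCert n m A ∧
        ∀ w : Fin n → Bool, (A w ↔ ExactlyOnceMem (k + 1) n w) := by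

  rintro ⟨A, hcert, hA⟩
  set L := Nat.clog 2 n ^ (k + 1) with hLdef
  have hL1 : 0 < L := lt_of_le_of_lt (Nat.zero_le m) hm
  -- the two-run string
  set w : Fin n → Bool := fun j =>
    if (j : ℕ) < L ∨ (L + 1 ≤ (j : ℕ) ∧ (j : ℕ) < 2 * L + 1) then false else true with hw
  have hwfalse : ∀ j : Fin n, ((j : ℕ) < L ∨ (L + 1 ≤ (j : ℕ) ∧ (j : ℕ) < 2 * L + 1)) →
      w j = false := by
    intro j hj; simp only [hw]; rw [if_pos hj]
  have hwtrue : ∀ j : Fin n, ¬ ((j : ℕ) < L ∨ (L + 1 ≤ (j : ℕ) ∧ (j : ℕ) < 2 * L + 1)) →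
      w j = true := by
    intro j hj; simp only [hw]; rw [if_neg hj]
  -- w is not in EXACTLYONCE
  have hnA : ¬ A w := by
    rw [hA]
    rintro ⟨i, hi, huniq⟩
    have h0 : hasRunAt n w 0 L := by
      refine ⟨by omega, fun j _ hj2 => hwfalse j (Or.inl (by omega))⟩
    have h1 : hasRunAt n w (L + 1) L := by
      refine ⟨by omega, fun j hj1 hj2 => hwfalse j (Or.inr ⟨by omega, by omega⟩)⟩
    have e0 := huniq 0 h0
    have e1 := huniq (L + 1) h1
    omega
  obtain ⟨S, hScard, hS⟩ := hcert w hnA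
  -- find a position in the second run not in S
  have hinj : Function.Injective (fun t : Fin L => (⟨L + 1 + (t : ℕ), by omega⟩ : Fin n)) := by
    intro a b hab
    simp only [Fin.mk.injEq] at hab
    exact Fin.ext (by omega)
  have hTcard : (Finset.image (fun t : Fin L => (⟨L + 1 + (t : ℕ), by omega⟩ : Fin n))
      Finset.univ).card = L := by
    rw [Finset.card_image_of_injective _ hinj, Finset.card_univ, Fintype.card_fin]
  have hnsub : ¬ (Finset.image (fun t : Fin L => (⟨L + 1 + (t : ℕ), by omega⟩ : Fin n))
      Finset.univ) ⊆ S := by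
    intro h
    have := Finset.card_le_card h
    rw [hTcard] at this
    omega
  obtain ⟨p, hpT, hpS⟩ := Finset.not_subset.mp hnsub
  obtain ⟨t, _, ht⟩ := Finset.mem_image.mp hpT
  have hp1 : L + 1 ≤ (p : ℕ) := by rw [← ht]; simp
  have hp2 : (p : ℕ) < 2 * L + 1 := by rw [← ht]; simp; omega
  -- the fixed string
  set v : Fin n → Bool := fun j => if j = p then true else w j with hv
  have hvA : A v := by
    rw [hA]
    refine ⟨0, ⟨by omega, fun j _ hj2 => ?_⟩, ?_⟩
    · have hjp : j ≠ p := by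
        intro h; subst h; omega
      simp only [hv, if_neg hjp]
      exact hwfalse j (Or.inl (by omega))
    · rintro i ⟨hile, hall⟩
      by_contra hne
      have hi1 : 1 ≤ i := Nat.pos_of_ne_zero hne
      rcases Nat.lt_or_ge L (i : ℕ) with hcase | hcase
      · -- i ≥ L + 1
        rcases le_or_gt i (p : ℕ) with hcase2 | hcase2
        · have := hall p hcase2 (by omega)
          simp [hv] at this
        · have hlt : i + L - 1 < n := by omega
          have := hall ⟨i + L - 1, hlt⟩ (by simp only [Fin.val_mk]; omega) (by simp only [Fin.val_mk]; omega)
          have hne2 : (⟨i + L - 1, hlt⟩ : Fin n) ≠ p := by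
            intro h
            have : i + L - 1 = (p : ℕ) := by rw [← h]
            omega
          rw [hv] at this
          simp only [if_neg hne2] at this
          rw [hwtrue ⟨i + L - 1, hlt⟩ (by simp only [Fin.val_mk]; omega)] at this
          exact Bool.true_eq_false.mp this
      · -- 1 ≤ i ≤ L
        have hLn : L < n := by omega
        have := hall ⟨L, hLn⟩ (by simp only [Fin.val_mk]; omega) (by simp only [Fin.val_mk]; omega)
        have hne2 : (⟨L, hLn⟩ : Fin n) ≠ p := by
          intro h
          have : L = (p : ℕ) := by rw [← h]
          omega
        rw [hv] at this
        simp only [if_neg hne2] at this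
        rw [hwtrue ⟨L, hLn⟩ (by simp only [Fin.val_mk]; omega)] at this
        exact Bool.true_eq_false.mp this
  refine hS v (fun i hiS => ?_) hvA
  have hip : i ≠ p := fun h => hpS (h ▸ hiS)
  simp only [hv, if_neg hip]
end

section
/- For all natural numbers k, l, n, m with ⌈log n⌉^((k+1)·(l+1)) ≤ n and m < ⌈log n⌉^((k+1)·(l+1)), there is no predicate A : (Fin n → Bool) → Prop having acceptance certificates of size m such that for every binary string w of length n, A(w) holds if and only if w ∈ GENCONSEQ_{k+1,l}. (Combinatorial core of the lower bound (a) in Theorem 5.) -/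
/-- `w ∈ GENCONSEQ_{k,l}`: `w` has a run of zeros of length `⌈log n⌉^(k·(l+1))`. -/
def GenConseqMem (k l n : ℕ) (w : Fin n → Bool) : Prop :=
  hasRun n w ((Nat.clog 2 n) ^ (k * (l + 1)))

theorem genconseq_lower_bound (k l n m : ℕ)
    (hkn : (Nat.clog 2 n) ^ ((k + 1) * (l + 1)) ≤ n)
    (hm : m < (Nat.clog 2 n) ^ ((k + 1) * (l + 1))) :
    ¬ ∃ A : (Fin n → Bool) → Prop, HasAccCert n m A ∧
        ∀ w : Fin n → Bool, (A w ↔ GenConseqMem (k + 1) l n w) := by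
  rintro ⟨A, hCert, hIff⟩
  set L := (Nat.clog 2 n) ^ ((k + 1) * (l + 1)) with hL
  -- the all-zero string is accepted
  have hA0 : A (fun _ => false) := by
    rw [hIff]
    exact ⟨0, by simpa using hkn, fun _ _ _ => rfl⟩
  obtain ⟨S, hScard, hS⟩ := hCert _ hA0
  -- v is false exactly on S
  set v : Fin n → Bool := fun i => if i ∈ S then false else true with hv
  have hAv : A v := hS v (fun i hi => by simp [hv, hi])
  rw [hIff] at hAv
  obtain ⟨i, hile, hrun⟩ := hAv
  -- all positions in [i, i+L) lie in S
  have hsub : ∀ j : Fin n, i ≤ (j : ℕ) → (j : ℕ) < i + L → j ∈ S := by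
    intro j h1 h2
    have := hrun j h1 h2
    by_contra hns
    simp [hv, hns] at this
  -- build an injection from Fin L into S
  have hcard : L ≤ S.card := by
    have : ∀ j : Fin L, (⟨i + j, lt_of_lt_of_le (by omega) hile⟩ : Fin n) ∈ S := by
      intro j
      exact hsub _ (by simp) (by simp [Nat.add_lt_add_left j.isLt])
    have hinj : Function.Injective
        (fun j : Fin L => (⟨i + j, lt_of_lt_of_le (by omega) hile⟩ : Fin n)) := by
      intro a b hab
      have : i + (a : ℕ) = i + (b : ℕ) := congrArg Fin.val hab
      exact Fin.ext (by omega)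
    calc L = Fintype.card (Fin L) := (Fintype.card_fin L).symm
      _ ≤ S.card := Fintype.card_le_of_injective
          (fun j => ⟨_, this j⟩)
          (fun a b hab => hinj (congrArg Subtype.val hab)) |>.trans_eq
          (Fintype.card_coe S)
  omega
end

section
/- For all natural numbers k, l, n, m with 2·⌈log n⌉^((k+1)·(l+1)) + 1 ≤ n and m < ⌈log n⌉^((k+1)·(l+1)), there is no predicate A : (Fin n → Bool) → Prop having rejection certificates of size m such that for every binary string w of length n, A(w) holds if and only if w ∈ GENEXACTLY_{k+1,l}. (Combinatorial core of the lower bound (b) in Theorem 5.) -/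
/-- `w ∈ GENEXACTLY_{k,l}`: exactly one position carries a run of zeros of length `⌈log n⌉^(k·(l+1))`. -/
def GenExactlyMem (k l n : ℕ) (w : Fin n → Bool) : Prop :=
  ∃! i : ℕ, hasRunAt n w i ((Nat.clog 2 n) ^ (k * (l + 1)))

theorem genexactly_lower_bound (k l n m : ℕ)
    (hkn : 2 * (Nat.clog 2 n) ^ ((k + 1) * (l + 1)) + 1 ≤ n)
    (hm : m < (Nat.clog 2 n) ^ ((k + 1) * (l + 1))) :
    ¬ ∃ A : (Fin n → Bool) → Prop, HasRejCert n m A ∧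
        ∀ w : Fin n → Bool, (A w ↔ GenExactlyMem (k + 1) l n w) := by
  rintro ⟨A, hcert, hA⟩
  set L := (Nat.clog 2 n) ^ ((k + 1) * (l + 1)) with hLdef
  have hL1 : 1 ≤ L := by omega
  -- the all-zeros string is rejected
  have hnotw : ¬ A (fun _ => false) := by
    rw [hA]
    rintro ⟨i, _, huniq⟩
    have h0 := huniq 0 ⟨by omega, fun j _ _ => rfl⟩
    have h1 := huniq 1 ⟨by omega, fun j _ _ => rfl⟩
    omega
  obtain ⟨S, hScard, hS⟩ := hcert _ hnotw
  set S' : Finset ℕ := S.image Fin.val with hS'def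
  have hS'card : S'.card ≤ m := le_trans Finset.card_image_le hScard
  set T : Finset ℕ := S'.image (fun s => if s + 1 ≤ L then s + 1 else s - L) with hTdef
  have hTcard : T.card ≤ m := le_trans Finset.card_image_le hS'card
  have hex : ∃ a ∈ Finset.range (L + 1), a ∉ T := by
    by_contra h
    push_neg at h
    have hsub : Finset.range (L + 1) ⊆ T := fun a ha => h a ha
    have := Finset.card_le_card hsub
    simp [Finset.card_range] at this
    omega
  obtain ⟨a, haR, haT⟩ := hex
  have haL : a ≤ L := Nat.lt_succ_iff.mp (Finset.mem_range.mp haR)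
  have hleft : ∀ s ∈ S', s + 1 ≠ a := by
    intro s hs heq
    exact haT (Finset.mem_image.mpr ⟨s, hs, by rw [if_pos (by omega)]; omega⟩)
  have hright : a + L ∉ S' := fun hs =>
    haT (Finset.mem_image.mpr ⟨a + L, hs, by rw [if_neg (by omega)]; omega⟩)
  -- the fooling string
  set v : Fin n → Bool :=
    fun j => if (a ≤ (j : ℕ) ∧ (j : ℕ) < a + L) ∨ (j : ℕ) ∈ S' then false else true with hvdef
  have hvA : ¬ A v := by
    apply hS v
    intro i hi
    have : (i : ℕ) ∈ S' := Finset.mem_image.mpr ⟨i, hi, rfl⟩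
    simp [hvdef, this]
  apply hvA
  rw [hA]
  refine ⟨a, ⟨by omega, ?_⟩, ?_⟩
  · intro j h1 h2
    show v j = false
    simp only [hvdef]
    rw [if_pos (Or.inl ⟨h1, h2⟩)]
  · rintro i ⟨hiL, hzero⟩
    have hcond : ∀ j : ℕ, i ≤ j → j < i + L → (a ≤ j ∧ j < a + L) ∨ j ∈ S' := by
      intro j hj1 hj2
      have hjn : j < n := by omega
      have hz := hzero ⟨j, hjn⟩ (by simpa) (by simpa)
      by_contra hc
      simp only [hvdef] at hz
      rw [if_neg hc] at hz
      exact absurd hz (by simp)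
    by_contra hne
    -- helper: the interval can't be entirely inside S'
    have hcards : ¬ (∀ j : ℕ, i ≤ j → j < i + L → j ∈ S') := by
      intro hall
      have hsub : Finset.Ico i (i + L) ⊆ S' := by
        intro j hj
        rw [Finset.mem_Ico] at hj
        exact hall j hj.1 hj.2
      have := Finset.card_le_card hsub
      rw [Nat.card_Ico] at this
      omega
    rcases Nat.lt_or_ge i a with hia | hia
    · rcases Nat.lt_or_ge (i + L) a with hc2 | hc2
      · exact hcards (fun j hj1 hj2 => by
          rcases hcond j hj1 hj2 with h | h
          · omega
          · exact h)
      · have := hcond (a - 1) (by omega) (by omega)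
        rcases this with h | h
        · omega
        · exact hleft (a - 1) h (by omega)
    · have hia' : a < i := by omega
      rcases Nat.lt_or_ge (a + L) i with hc2 | hc2
      · exact hcards (fun j hj1 hj2 => by
          rcases hcond j hj1 hj2 with h | h
          · omega
          · exact h)
      · have := hcond (a + L) (by omega) (by omega)
        rcases this with h | h
        · omega
        · exact hright h
end

section
/- Let n, L, i be natural numbers with 1 ≤ L ≤ n and i < L, and let y : Fin n → Bool be the binary string 0^i 1 0^(L−i−1) 1^(n−L), i.e., y(j) = false if and only if (j < L and j ≠ i). Then y has no run of zeros of length L. -/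
theorem no_run_after_flip (n L i : ℕ) (hL : 1 ≤ L) (hLn : L ≤ n) (hi : i < L)
    (y : Fin n → Bool)
    (hy : ∀ j : Fin n, y j = false ↔ ((j : ℕ) < L ∧ (j : ℕ) ≠ i)) :
    ¬ hasRun n y L := by
  rintro ⟨p, hpn, hrun⟩
  rcases Nat.eq_zero_or_pos p with hp | hp
  · subst hp
    have hin : i < n := lt_of_lt_of_le hi hLn
    have := hrun ⟨i, hin⟩ (by simp) (by simpa using hi)
    rw [hy] at this
    exact this.2 rfl
  · have hjn : p + L - 1 < n := by omega
    have := hrun ⟨p + L - 1, hjn⟩ (by simp; omega) (by simp; omega)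
    rw [hy] at this
    simp at this
    omega
end

section
/- Let n, L, i be natural numbers with 1 ≤ L, 2L + 1 ≤ n, and i < L, and let y : Fin n → Bool be the binary string 0^i 1 0^(L−i−1) 1 0^L 1^(n−2L−1), i.e., y(j) = false if and only if ((j < L and j ≠ i) or (L + 1 ≤ j < 2L + 1)). Then the set of positions p such that y has a run of zeros of length L at position p is exactly {L + 1}; in particular y has a run of zeros of length L at exactly one position. -/
theorem one_run_position (n L i : ℕ) (hL : 1 ≤ L) (hn : 2 * L + 1 ≤ n) (hi : i < L)
    (y : Fin n → Bool)
    (hy : ∀ j : Fin n, y j = false ↔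
        (((j : ℕ) < L ∧ (j : ℕ) ≠ i) ∨ (L + 1 ≤ (j : ℕ) ∧ (j : ℕ) < 2 * L + 1))) :
    (∀ p : ℕ, hasRunAt n y p L ↔ p = L + 1) ∧
    ∃! p : ℕ, hasRunAt n y p L := by
  have key : ∀ p : ℕ, hasRunAt n y p L ↔ p = L + 1 := by
    intro p
    constructor
    · rintro ⟨hpn, hall⟩
      by_contra hne
      rcases lt_trichotomy p (L+1) with h | h | h
      · rcases le_or_gt p i with hpi | hip
        · have hin : i < n := by omega
          have := hall ⟨i, hin⟩ (by simp only [Fin.val_mk]; omega) (by simp only [Fin.val_mk]; omega)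
          rw [hy] at this
          simp only [Fin.val_mk] at this
          omega
        · have hLn : L < n := by omega
          have := hall ⟨L, hLn⟩ (by simp only [Fin.val_mk]; omega) (by simp only [Fin.val_mk]; omega)
          rw [hy] at this
          simp only [Fin.val_mk] at this
          omega
      · exact hne h
      · rcases le_or_gt p (2*L+1) with h2 | h2
        · have h3 : 2*L+1 < n := by omega
          have := hall ⟨2*L+1, h3⟩ (by simp only [Fin.val_mk]; omega) (by simp only [Fin.val_mk]; omega)
          rw [hy] at this; simp only [Fin.val_mk] at this; omega
        · have h3 : p < n := by omega
          have := hall ⟨p, h3⟩ (by simp only [Fin.val_mk]; omega) (by simp only [Fin.val_mk]; omega)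
          rw [hy] at this; simp only [Fin.val_mk] at this; omega
    · rintro rfl
      refine ⟨by omega, fun j h1 h2 => ?_⟩
      rw [hy]; right; omega
  exact ⟨key, ⟨L+1, (key _).mpr rfl, fun p hp => (key p).mp hp⟩⟩
end

section
/- For all natural numbers k and c, there exists N such that for every n ≥ N: (a) the membership indicator of INIT_{k+1} on binary strings of length n is ⌈log n⌉^(k+1)-local, and (b) there is no (c · ⌈log n⌉^k)-local function f : (Fin n → Bool) → Bool such that f(w) = true ↔ w ∈ INIT_{k+1} for all w. (Query-complexity packaging of Theorem 1: DTIME[log^k n] ⊊ DTIME[log^(k+1) n], witnessed by INIT_{k+1}.) -/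
/-- Eventually `t^m * 2 ≤ 2^t`. -/
lemma aux_poly_lt_exp (m : ℕ) : ∃ T : ℕ, ∀ t : ℕ, T ≤ t → t ^ m * 2 ≤ 2 ^ t := by
  have h := isLittleO_pow_const_const_pow_of_one_lt (R := ℝ) m
    (r := 2) (by norm_num)
  have h2 := h.def (by norm_num : (0:ℝ) < 1/2)
  rw [Filter.eventually_atTop] at h2
  obtain ⟨T, hT⟩ := h2
  refine ⟨T, fun t ht => ?_⟩
  have := hT t ht
  simp only [Real.norm_eq_abs] at this
  have h3 : (t:ℝ) ^ m ≤ 1/2 * 2 ^ t := by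
    calc (t:ℝ) ^ m = |(t:ℝ) ^ m| := (abs_of_nonneg (by positivity)).symm
    _ ≤ 1/2 * |(2:ℝ) ^ t| := this
    _ = 1/2 * 2 ^ t := by rw [abs_of_pos (by positivity)]
  have h4 : ((t ^ m * 2 : ℕ) : ℝ) ≤ ((2 ^ t : ℕ) : ℝ) := by
    push_cast
    linarith
  exact_mod_cast h4

theorem init_hierarchy (k c : ℕ) :
    ∃ N : ℕ, ∀ n : ℕ, n ≥ N →
      (∀ w : Fin n → Bool, ∃ S : Finset (Fin n),
          S.card ≤ (Nat.clog 2 n) ^ (k + 1) ∧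
          ∀ v : Fin n → Bool, (∀ i ∈ S, v i = w i) →
            (InitMem (k + 1) n v ↔ InitMem (k + 1) n w)) ∧
      ¬ ∃ f : (Fin n → Bool) → Bool, IsLocal n (c * (Nat.clog 2 n) ^ k) f ∧
          ∀ w : Fin n → Bool, (f w = true ↔ InitMem (k + 1) n w) := by
  obtain ⟨T, hT⟩ := aux_poly_lt_exp (k + 1)
  set M := max T c with hM
  refine ⟨2 ^ M + 1, fun n hn => ?_⟩
  have hn1 : 1 < n := by
    have h2M : 0 < 2 ^ M := Nat.pow_pos (by norm_num)
    omega
  set t := Nat.clog 2 n with ht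
  have htM : M < t := by
    rw [ht, Nat.lt_clog_iff_pow_lt (by norm_num)]
    omega
  have htT : T ≤ t := le_trans (le_max_left _ _) htM.le
  have htc : c < t := lt_of_le_of_lt (le_max_right _ _) htM
  set L := t ^ (k + 1) with hL
  -- L < n
  have hLn : L < n := by
    have h1 : L * 2 ≤ 2 ^ t := hT t htT
    have ht1 : 1 ≤ t := by omega
    have h2 : 2 ^ t = 2 ^ (t - 1) * 2 := by
      rw [← pow_succ]; congr 1; omega
    have h3 : L ≤ 2 ^ (t - 1) := by omega
    have h4 : 2 ^ (t - 1) < n := by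
      have := Nat.pow_pred_clog_lt_self (b := 2) (by norm_num) hn1
      simpa [← ht, Nat.pred_eq_sub_one] using this
    omega
  -- the prefix set
  set P : Finset (Fin n) := Finset.univ.filter (fun i => (i : ℕ) < L) with hP
  have hPcard_le : P.card ≤ L := by
    have : ∀ i ∈ P, (i : ℕ) ∈ Finset.range L := by
      intro i hi
      simp only [hP, Finset.mem_filter] at hi
      simpa using hi.2
    calc P.card ≤ (Finset.range L).card :=
          Finset.card_le_card_of_injOn (fun i => (i : ℕ)) this
            (fun a _ b _ h => Fin.val_injective h)
      _ = L := Finset.card_range L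
  have hPcard_ge : L ≤ P.card := by
    have : ∀ j ∈ (Finset.univ : Finset (Fin L)),
        (⟨(j : ℕ), lt_trans j.2 hLn⟩ : Fin n) ∈ P := by
      intro j _
      simp [hP, j.2]
    calc L = (Finset.univ : Finset (Fin L)).card := by simp
      _ ≤ P.card := Finset.card_le_card_of_injOn _ this
          (fun a _ b _ h => by
            apply Fin.val_injective
            simpa using congrArg Fin.val h)
  constructor
  · -- locality of InitMem
    intro w
    refine ⟨P, hPcard_le, fun v hv => ?_⟩
    have hmem : ∀ u : Fin n → Bool,
        InitMem (k + 1) n u ↔ ∀ i : Fin n, (i : ℕ) < L → u i = false := by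
      intro u
      unfold InitMem
      rw [← ht, ← hL]
      exact ⟨fun h => h.2, fun h => ⟨hLn.le, h⟩⟩
    rw [hmem, hmem]
    constructor <;> intro h i hi
    · rw [← hv i (by simp [hP, hi])]; exact h i hi
    · rw [hv i (by simp [hP, hi])]; exact h i hi
  · -- lower bound
    rintro ⟨f, hloc, hf⟩
    obtain ⟨S, hScard, hS⟩ := hloc (fun _ => false)
    have hSlt : S.card < P.card := by
      have : c * t ^ k < L := by
        rw [hL, pow_succ, mul_comm (t ^ k) t]
        exact Nat.mul_lt_mul_of_lt_of_le htc le_rfl (Nat.pow_pos (n := k) (by omega))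
      omega
    obtain ⟨i, hiP, hiS⟩ : ∃ i ∈ P, i ∉ S := by
      by_contra h
      push_neg at h
      exact absurd (Finset.card_le_card h) (by omega)
    have hiL : (i : ℕ) < L := by
      simp only [hP, Finset.mem_filter] at hiP
      exact hiP.2
    set v : Fin n → Bool := Function.update (fun _ => false) i true with hv
    have hfv : f v = f (fun _ => false) := by
      apply hS
      intro j hj
      rw [hv, Function.update_of_ne (by rintro rfl; exact hiS hj)]
    have hw0 : f (fun _ => false) = true := by
      rw [hf]
      exact ⟨by rw [← ht, ← hL]; exact hLn.le, fun _ _ => rfl⟩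
    have hvInit : InitMem (k + 1) n v := (hf v).mp (hfv.trans hw0)
    have := hvInit.2 i (by rw [← ht, ← hL]; exact hiL)
    rw [hv, Function.update_self] at this
    simp at this
end

section
/- For all natural numbers k and c, there exists N such that for every n ≥ N: (a) membership in CONSEQ_{k+1} on binary strings of length n has acceptance certificates of size ⌈log n⌉^(k+1) (i.e., the membership predicate itself has such certificates), and (b) there is no predicate A : (Fin n → Bool) → Prop having acceptance certificates of size c · ⌈log n⌉^k with A(w) ↔ w ∈ CONSEQ_{k+1} for all w. (Query-complexity packaging of Theorem 2: NTIME[log^k n] ⊊ NTIME[log^(k+1) n], witnessed by CONSEQ_{k+1}.) -/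
lemma sq_le_two_pow : ∀ r : ℕ, 4 ≤ r → r ^ 2 ≤ 2 ^ r := by
  intro r hr
  induction r with
  | zero => omega
  | succ r ih =>
    rcases Nat.lt_or_ge r 4 with h | h
    · interval_cases r <;> norm_num at *
    · have h1 := ih h
      have h2 : (r + 1) ^ 2 ≤ 2 * r ^ 2 := by nlinarith
      calc (r + 1) ^ 2 ≤ 2 * r ^ 2 := h2
        _ ≤ 2 * 2 ^ r := by omega
        _ = 2 ^ (r + 1) := by ring

lemma log_le_sqrt (t : ℕ) (ht : 9 ≤ t) : Nat.log 2 t ≤ Nat.sqrt t := by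
  set s := Nat.sqrt t with hs
  have hs3 : 3 ≤ s := by
    have h := Nat.sqrt_le_sqrt ht
    have h9 : Nat.sqrt 9 = 3 := by rw [show (9:ℕ) = 3^2 by norm_num, Nat.sqrt_eq']
    omega
  have h1 : t < (s + 1) ^ 2 := Nat.lt_succ_sqrt' t
  have h2 : (s + 1) ^ 2 ≤ 2 ^ (s + 1) := sq_le_two_pow (s + 1) (by omega)
  have : t < 2 ^ (s + 1) := lt_of_lt_of_le h1 h2
  have := (Nat.log_lt_iff_lt_pow (by norm_num) (by omega)).2 this
  omega

lemma pow_le_two_pow_pred (m t : ℕ) (ht : 16 * (m + 1) ^ 2 ≤ t) :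
    t ^ m ≤ 2 ^ (t - 1) := by
  set s := Nat.sqrt t with hs
  have hs4 : 4 * (m + 1) ≤ s := by
    have h1 : Nat.sqrt (16 * (m + 1) ^ 2) ≤ s := Nat.sqrt_le_sqrt ht
    have h2 : Nat.sqrt (16 * (m + 1) ^ 2) = 4 * (m + 1) := by
      have : 16 * (m + 1) ^ 2 = (4 * (m + 1)) ^ 2 := by ring
      rw [this, Nat.sqrt_eq']
    omega
  have hss : s * s ≤ t := Nat.sqrt_le t
  have ht9 : 9 ≤ t := by nlinarith
  have hlog : Nat.log 2 t ≤ s := log_le_sqrt t ht9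
  have hexp : (Nat.log 2 t + 1) * m ≤ t - 1 := by
    have h1 : (Nat.log 2 t + 1) * m ≤ (s + 1) * m := by
      apply Nat.mul_le_mul_right; omega
    have h2 : (s + 1) * m ≤ s * s - s := by
      have : (s + 1) * m + (s + 1) * m + s + s ≤ s * s := by nlinarith
      omega
    omega
  calc t ^ m ≤ (2 ^ (Nat.log 2 t + 1)) ^ m := by
        apply Nat.pow_le_pow_left
        exact (Nat.lt_pow_succ_log_self (by norm_num) t).le
    _ = 2 ^ ((Nat.log 2 t + 1) * m) := by rw [← pow_mul]
    _ ≤ 2 ^ (t - 1) := Nat.pow_le_pow_right (by norm_num) hexp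

theorem conseq_hierarchy (k c : ℕ) :
    ∃ N : ℕ, ∀ n : ℕ, n ≥ N →
      HasAccCert n ((Nat.clog 2 n) ^ (k + 1)) (fun w => ConseqMem (k + 1) n w) ∧
      ¬ ∃ A : (Fin n → Bool) → Prop,
          HasAccCert n (c * (Nat.clog 2 n) ^ k) A ∧
          ∀ w : Fin n → Bool, (A w ↔ ConseqMem (k + 1) n w) := by
  refine ⟨2 ^ (max (16 * (k + 2) ^ 2) (c + 1)) + 1, fun n hn => ?_⟩
  set t := Nat.clog 2 n with htdef
  set L := t ^ (k + 1) with hLdef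
  have h1n : 1 < n := by
    have : 1 ≤ 2 ^ (max (16 * (k + 2) ^ 2) (c + 1)) := Nat.one_le_two_pow
    omega
  have htbig : max (16 * (k + 2) ^ 2) (c + 1) < t := by
    rw [htdef, Nat.lt_clog_iff_pow_lt (by norm_num)]
    omega
  have hct : c < t := by
    have := le_max_right (16 * (k + 2) ^ 2) (c + 1); omega
  have hksq : 16 * ((k + 1) + 1) ^ 2 ≤ t := by
    show 16 * (k + 2) ^ 2 ≤ t
    have := le_max_left (16 * (k + 2) ^ 2) (c + 1); omega
  have hLn : L < n := by
    calc L ≤ 2 ^ (t - 1) := pow_le_two_pow_pred (k + 1) t hksq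
      _ = 2 ^ t.pred := by rfl
      _ < n := Nat.pow_pred_clog_lt_self (by norm_num) h1n
  have htpos : 0 < t := by omega
  constructor
  · -- certificates for ConseqMem
    rintro w ⟨i, hiL, hrun⟩
    refine ⟨Finset.univ.filter (fun j : Fin n => i ≤ (j : ℕ) ∧ (j : ℕ) < i + L), ?_, ?_⟩
    · have hcard : (Finset.univ.filter
          (fun j : Fin n => i ≤ (j : ℕ) ∧ (j : ℕ) < i + L)).card
          ≤ (Finset.Ico i (i + L)).card := by
        apply Finset.card_le_card_of_injOn (fun j : Fin n => (j : ℕ))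
        · intro a ha
          simp only [Finset.mem_coe, Finset.mem_filter] at ha
          exact Finset.mem_Ico.2 ⟨ha.2.1, ha.2.2⟩
        · intro a _ b _ hab
          exact Fin.ext hab
      simpa using hcard
    · intro v hv
      refine ⟨i, hiL, fun j hj1 hj2 => ?_⟩
      have hjS : j ∈ Finset.univ.filter (fun j : Fin n => i ≤ (j : ℕ) ∧ (j : ℕ) < i + L) := by
        simp [hj1, hj2, hLdef, htdef]
      rw [hv j hjS]
      exact hrun j hj1 hj2
  · -- lower bound
    rintro ⟨A, hcert, hiff⟩
    have npos : 0 < n := by omega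
    have hA0 : A (fun _ => false) :=
      (hiff _).2 ⟨0, by simpa using hLn.le, fun j _ _ => rfl⟩
    obtain ⟨S, hScard, hScert⟩ := hcert _ hA0
    set v : Fin n → Bool := fun i => decide (i ∉ S) with hvdef
    have hAv : A v := hScert v (fun i hi => by simp [hvdef, hi])
    obtain ⟨i, hiL, hrun⟩ := (hiff v).1 hAv
    have hLS : L ≤ S.card := by
      have := Finset.card_le_card_of_injOn
        (s := Finset.Ico i (i + L)) (t := S)
        (fun j : ℕ => (⟨j % n, Nat.mod_lt j npos⟩ : Fin n))
        (fun j hj => by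
          rw [Finset.mem_coe, Finset.mem_Ico] at hj
          have hjn : j < n := lt_of_lt_of_le hj.2 hiL
          have hmod : j % n = j := Nat.mod_eq_of_lt hjn
          have := hrun ⟨j % n, Nat.mod_lt j npos⟩ (by simp [hmod, hj.1]) (by simp [hmod, hj.2, ← htdef, ← hLdef])
          simp only [hvdef, decide_eq_false_iff_not, not_not] at this
          exact this)
        (fun a ha b hb hab => by
          simp only [Finset.coe_Ico, Set.mem_Ico] at ha hb
          have han : a < n := lt_of_lt_of_le ha.2 hiL
          have hbn : b < n := lt_of_lt_of_le hb.2 hiL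
          have h := congrArg Fin.val hab
          simpa [Nat.mod_eq_of_lt han, Nat.mod_eq_of_lt hbn] using h)
      simpa using this
    have hlt : c * t ^ k < L := by
      rw [hLdef, pow_succ]
      calc c * t ^ k < t * t ^ k :=
            (Nat.mul_lt_mul_right (Nat.pow_pos (n := k) htpos)).2 hct
        _ = t ^ k * t := Nat.mul_comm _ _
    omega
end

section
/- For all natural numbers k and c, there exists N such that for every n ≥ N: (a) the membership predicate of NOCONSEQ_{k+1} on binary strings of length n has rejection certificates of size ⌈log n⌉^(k+1), and (b) there is no predicate A : (Fin n → Bool) → Prop having rejection certificates of size c · ⌈log n⌉^k with A(w) ↔ w ∈ NOCONSEQ_{k+1} for all w. (Query-complexity packaging of Theorem 3: ATIME^op[log^k n, 1] ⊊ ATIME^op[log^(k+1) n, 1], witnessed by NOCONSEQ_{k+1}.) -/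
lemma poly_le_exp_aux (k : ℕ) : ∃ M : ℕ, ∀ m ≥ M, m ^ k ≤ 2 ^ (m - 1) := by
  have h := (isLittleO_pow_const_const_pow_of_one_lt (R := ℝ) k
    (by norm_num : (1:ℝ) < 2)).def (by norm_num : (0:ℝ) < 1/2)
  obtain ⟨M, hM⟩ := Filter.eventually_atTop.mp h
  refine ⟨max M 1, fun m hm => ?_⟩
  have h1 : 1 ≤ m := le_trans (le_max_right _ _) hm
  have h2 := hM m (le_trans (le_max_left _ _) hm)
  simp only [norm_pow, Real.norm_natCast, Real.norm_ofNat] at h2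
  have h3 : (2:ℝ) ^ m = 2 * 2 ^ (m - 1) := by
    rw [← pow_succ']; congr 1; omega
  have h4 : (m:ℝ) ^ k ≤ (2:ℝ) ^ (m - 1) := by rw [h3] at h2; linarith
  exact_mod_cast h4

theorem noconseq_hierarchy (k c : ℕ) :
    ∃ N : ℕ, ∀ n : ℕ, n ≥ N →
      HasRejCert n ((Nat.clog 2 n) ^ (k + 1)) (fun w => NoConseqMem (k + 1) n w) ∧
      ¬ ∃ A : (Fin n → Bool) → Prop,
          HasRejCert n (c * (Nat.clog 2 n) ^ k) A ∧
          ∀ w : Fin n → Bool, (A w ↔ NoConseqMem (k + 1) n w) := by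
  obtain ⟨M₀, hM₀⟩ := poly_le_exp_aux (k + 1)
  set M : ℕ := max M₀ (c + 1) with hMdef
  refine ⟨2 ^ M, fun n hn => ?_⟩
  set m0 : ℕ := Nat.clog 2 n with hm0
  set L : ℕ := m0 ^ (k + 1) with hL
  have hn2 : 2 ≤ n := by
    have h1 : 1 ≤ M := le_trans (by omega) (le_max_right M₀ (c + 1))
    calc 2 = 2 ^ 1 := rfl
      _ ≤ 2 ^ M := Nat.pow_le_pow_right (by norm_num) h1
      _ ≤ n := hn
  have hm0M : M ≤ m0 := by
    have := Nat.clog_mono_right 2 hn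
    rwa [Nat.clog_pow 2 M one_lt_two] at this
  have hm0c : c < m0 := lt_of_lt_of_le (lt_of_lt_of_le (Nat.lt_succ_self c) (le_max_right _ _)) hm0M
  have hLn : L ≤ n := by
    have h1 : L ≤ 2 ^ (m0 - 1) := hM₀ m0 (le_trans (le_max_left _ _) hm0M)
    have h2 : 2 ^ (m0 - 1) < n := Nat.pow_pred_clog_lt_self one_lt_two (by omega)
    omega
  constructor
  · -- part (a)
    intro w hw
    have hrun : hasRun n w L := not_not.mp hw
    obtain ⟨i, hle, hall⟩ := hrun
    refine ⟨(Finset.Ico i (i + L)).attachFin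
      (fun m hm => lt_of_lt_of_le (Finset.mem_Ico.mp hm).2 hle), ?_, ?_⟩
    · rw [Finset.card_attachFin, Nat.card_Ico]
      omega
    · intro v hv hAv
      refine hAv ⟨i, hle, fun j hj1 hj2 => ?_⟩
      rw [hv j (by rw [Finset.mem_attachFin, Finset.mem_Ico]; exact ⟨hj1, hj2⟩)]
      exact hall j hj1 hj2
  · -- part (b)
    rintro ⟨A, hcert, hiff⟩
    have hw0 : ¬ A (fun _ => false) := by
      rw [hiff]
      intro h
      exact h ⟨0, by simp only [Nat.zero_add]; exact hLn, fun j _ _ => rfl⟩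
    obtain ⟨S, hScard, hS⟩ := hcert _ hw0
    set v : Fin n → Bool := fun j => decide (j ∉ S) with hv
    have hAv : ¬ A v := hS v (fun i hi => by simp [hv, hi])
    rw [hiff] at hAv
    have hrun : hasRun n v L := not_not.mp hAv
    obtain ⟨i, hle, hall⟩ := hrun
    have hsub : (Finset.Ico i (i + L)).attachFin
        (fun m hm => lt_of_lt_of_le (Finset.mem_Ico.mp hm).2 hle) ⊆ S := by
      intro j hj
      rw [Finset.mem_attachFin, Finset.mem_Ico] at hj
      have := hall j hj.1 hj.2
      simpa [hv] using this
    have hLS : L ≤ S.card := by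
      have := Finset.card_le_card hsub
      rwa [Finset.card_attachFin, Nat.card_Ico, Nat.add_sub_cancel_left] at this
    have hmono : c * m0 ^ k < L := by
      have hpos : 0 < m0 ^ k := Nat.pow_pos (by omega)
      have : c * m0 ^ k < m0 * m0 ^ k := (Nat.mul_lt_mul_right hpos).mpr hm0c
      calc c * m0 ^ k < m0 * m0 ^ k := this
        _ = L := by rw [hL, pow_succ, mul_comm]
    omega
end

section
/- For all natural numbers k and c, there exists N such that for every n ≥ N, there is no predicate A : (Fin n → Bool) → Prop having rejection certificates of size c · ⌈log n⌉^k such that A(w) ↔ w ∈ EXACTLYONCE_{k+1} for all binary strings w of length n. (Query-complexity packaging of the lower bound of Theorem 4: EXACTLYONCE_{k+1} ∉ ATIME[log^k n, 2].) -/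
lemma poly_lt_exp (D j : ℕ) : ∃ M : ℕ, ∀ m ≥ M, D * m ^ j < 2 ^ m := by
  have h := tendsto_pow_const_div_const_pow_of_one_lt j (show (1:ℝ) < 2 by norm_num)
  have h2 : ∀ᶠ m : ℕ in Filter.atTop, (m:ℝ)^j / 2^m < 1/(D+1) :=
    h.eventually (gt_mem_nhds (by positivity))
  obtain ⟨M, hM⟩ := Filter.eventually_atTop.mp h2
  refine ⟨M, fun m hm => ?_⟩
  have h3 := hM m hm
  have h4 : (0:ℝ) < 2 ^ m := by positivity
  have h5 : ((m:ℝ)^j) * (D+1) < 1 * 2 ^ m := by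
    rw [div_lt_div_iff₀ h4 (by positivity)] at h3
    linarith
  have h6 : ((D * m ^ j : ℕ) : ℝ) < ((2 ^ m : ℕ) : ℝ) := by
    push_cast
    nlinarith [pow_nonneg (Nat.cast_nonneg (α := ℝ) m) j]
  exact_mod_cast h6

theorem exactlyonce_hierarchy_lower (k c : ℕ) :
    ∃ N : ℕ, ∀ n : ℕ, n ≥ N →
      ¬ ∃ A : (Fin n → Bool) → Prop,
          HasRejCert n (c * (Nat.clog 2 n) ^ k) A ∧
          ∀ w : Fin n → Bool, (A w ↔ ExactlyOnceMem (k + 1) n w) := by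
  obtain ⟨M, hM⟩ := poly_lt_exp (2 * (2 * c + 1)) (k + 1)
  refine ⟨2 ^ (M + c + 1) + 1, fun n hn => ?_⟩
  rintro ⟨A, hcert, hiff⟩
  set g := Nat.clog 2 n with hg
  set L := g ^ (k + 1) with hLdef
  set m := c * g ^ k with hmdef
  have h2n : 2 ≤ n := by
    have h1 : 1 ≤ 2 ^ (M + c + 1) := Nat.one_le_two_pow
    omega
  have hgM : M + c + 1 ≤ g := by
    have h1 : 2 ^ (M + c) < n := by
      have hle : (2:ℕ) ^ (M + c) ≤ 2 ^ (M + c + 1) :=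
        Nat.pow_le_pow_right (by norm_num) (by omega)
      omega
    have h2 : M + c < Nat.clog 2 n := (Nat.lt_clog_iff_pow_lt (by norm_num)).mpr h1
    omega
  have hcg : c < g := by omega
  have hgpos : 0 < g := by omega
  have hXpos : 0 < g ^ k := pow_pos hgpos k
  have hLX : L = g ^ k * g := by rw [hLdef, pow_succ]
  have hmL : m < L := by
    rw [hmdef, hLX]
    calc c * g ^ k < g * g ^ k := by
          exact (Nat.mul_lt_mul_right hXpos).mpr hcg
      _ = g ^ k * g := by ring
  have hpow : 2 ^ (g - 1) < n := Nat.pow_pred_clog_lt_self (by norm_num) (by omega)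
  have hbig : L + 2 * m + 1 ≤ n := by
    have h1 : 2 * (2 * c + 1) * g ^ (k + 1) < 2 ^ g := hM g (by omega)
    have h2 : 2 ^ g = 2 * 2 ^ (g - 1) := by
      rw [← pow_succ']
      congr 1
      omega
    have hb1 : 2 * (2 * c + 1) * g ^ (k + 1) = 2 * ((2 * c + 1) * g ^ (k + 1)) := by ring
    have h3 : (2 * c + 1) * g ^ (k + 1) < 2 ^ (g - 1) := by omega
    have hb2 : (2 * c + 1) * g ^ (k + 1) = 2 * (c * g ^ (k + 1)) + g ^ (k + 1) := by ring
    have h4 : c * g ^ k ≤ c * g ^ (k + 1) :=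
      Nat.mul_le_mul_left c (Nat.pow_le_pow_right hgpos (by omega))
    have hL' : L = g ^ (k + 1) := hLdef
    have hm' : m = c * g ^ k := hmdef
    omega
  have hLpos : 0 < L := pow_pos hgpos _
  -- the all-zeros word is rejected
  have hw0 : ¬ ExactlyOnceMem (k + 1) n (fun _ => false) := by
    rintro ⟨i, hi, huniq⟩
    have h0 : hasRunAt n (fun _ => false) 0 L := ⟨by omega, fun j _ _ => rfl⟩
    have h1 : hasRunAt n (fun _ => false) 1 L := ⟨by omega, fun j _ _ => rfl⟩
    have e0 := huniq 0 h0
    have e1 := huniq 1 h1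
    omega
  obtain ⟨S, hScard, hS⟩ := hcert (fun _ => false)
    (fun h => hw0 ((hiff _).mp h))
  set S' : Finset ℕ := S.image Fin.val with hS'def
  have hS'card : S'.card ≤ m := le_trans (Finset.card_image_le) hScard
  -- choose the window position a
  set F : Finset ℕ := S'.image (· + 1) ∪ S'.image (· - L) with hFdef
  have hFcard : F.card ≤ 2 * m := by
    rw [hFdef]
    have := Finset.card_union_le (S'.image (· + 1)) (S'.image (· - L))
    have h1 := Finset.card_image_le (s := S') (f := (· + 1))
    have h2 := Finset.card_image_le (s := S') (f := (· - L))
    omega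
  have hcard : F.card < (Finset.range (n - L + 1)).card := by
    rw [Finset.card_range]
    omega
  have hnsub : ¬ (Finset.range (n - L + 1) ⊆ F) := fun h =>
    absurd (Finset.card_le_card h) (not_le.mpr hcard)
  obtain ⟨a, haR, haF⟩ := Finset.not_subset.mp hnsub
  rw [Finset.mem_range] at haR
  have haL : a + L ≤ n := by omega
  have ha1 : ∀ s ∈ S', s + 1 ≠ a := by
    intro s hs he
    exact haF (Finset.mem_union_left _ (he ▸ Finset.mem_image_of_mem (· + 1) hs))
  have ha2 : ∀ s ∈ S', s - L ≠ a := by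
    intro s hs he
    exact haF (Finset.mem_union_right _ (he ▸ Finset.mem_image_of_mem (· - L) hs))
  -- the perturbed word
  set v : Fin n → Bool :=
    fun i => if (a ≤ (i : ℕ) ∧ (i : ℕ) < a + L) ∨ (i : ℕ) ∈ S' then false else true with hvdef
  have hagree : ∀ i ∈ S, v i = (fun _ => false) i := by
    intro i hi
    have : (i : ℕ) ∈ S' := Finset.mem_image_of_mem _ hi
    simp [hvdef, this]
  have hrun_a : hasRunAt n v a L := by
    refine ⟨haL, fun j hj1 hj2 => ?_⟩
    simp only [hvdef]
    exact if_pos (Or.inl ⟨hj1, hj2⟩)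
  have hrun_unique : ∀ i, hasRunAt n v i L → i = a := by
    rintro i ⟨hiL, hzero⟩
    by_contra hne
    have key : ∀ j : ℕ, i ≤ j → j < i + L → (a ≤ j ∧ j < a + L) ∨ j ∈ S' := by
      intro j h1 h2
      by_contra hj
      have hjn : j < n := lt_of_lt_of_le h2 hiL
      have hz := hzero ⟨j, hjn⟩ h1 h2
      simp only [hvdef] at hz
      rw [if_neg (by simpa using hj)] at hz
      exact Bool.noConfusion hz
    rcases Nat.lt_or_ge i a with hia | hia
    · rcases Nat.lt_or_ge a (i + L) with hial | hial
      · rcases key (a - 1) (by omega) (by omega) with ⟨h, _⟩ | hmem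
        · omega
        · exact ha1 _ hmem (by omega)
      · have hsub : Finset.Ico i (i + L) ⊆ S' := by
          intro j hj
          rw [Finset.mem_Ico] at hj
          rcases key j hj.1 hj.2 with ⟨h, _⟩ | h
          · omega
          · exact h
        have := Finset.card_le_card hsub
        rw [Nat.card_Ico] at this
        omega
    · have hai : a < i := by omega
      rcases Nat.lt_or_ge (a + L) i with hial | hial
      · have hsub : Finset.Ico i (i + L) ⊆ S' := by
          intro j hj
          rw [Finset.mem_Ico] at hj
          rcases key j hj.1 hj.2 with ⟨_, h⟩ | h
          · omega
          · exact h
        have := Finset.card_le_card hsub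
        rw [Nat.card_Ico] at this
        omega
      · rcases key (a + L) (by omega) (by omega) with ⟨_, h⟩ | hmem
        · omega
        · exact ha2 _ hmem (by omega)
  have hvE : ExactlyOnceMem (k + 1) n v :=
    ⟨a, hrun_a, fun i hi => hrun_unique i hi⟩
  exact hS v hagree ((hiff v).mpr hvE)
end
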